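/- arXiv:1103.1421 — 8 statements merged into one kernel-verified Lean document; each statement's English description precedes it below -/
import Mathlib

section
/- Let ā < b̄ be real numbers and let Ω = [ā, b̄]. Let ρ : Ω → ℝ be a nonnegative integrable function and let M, K > 0 be constants with M ≤ ∫_Ω ρ(y) dy ≤ K. Then for every continuously differentiable function v : Ω → ℝ (for which ρ·v is integrable on Ω) and every x ∈ Ω, one has |v(x)| ≤ (K/M) ∫_Ω |v'(y)| dy + (1/M) |∫_Ω ρ(y) v(y) dy|. -/
open MeasureTheory Set

/-- Lemma 2.1: weighted sup-norm estimate on a bounded interval. -/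
theorem stmt_0 (a b : ℝ) (hab : a < b) (ρ v v' : ℝ → ℝ) (M K : ℝ)
    (hM : 0 < M) (hK : 0 < K)
    (hρ0 : ∀ y ∈ Icc a b, 0 ≤ ρ y)
    (hρint : IntegrableOn ρ (Icc a b))
    (hlow : M ≤ ∫ y in Icc a b, ρ y)
    (hup : (∫ y in Icc a b, ρ y) ≤ K)
    (hv : ∀ y ∈ Icc a b, HasDerivWithinAt v (v' y) (Icc a b) y)
    (hv' : ContinuousOn v' (Icc a b))
    (hρv : IntegrableOn (fun y => ρ y * v y) (Icc a b)) :
    ∀ x ∈ Icc a b,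
      |v x| ≤ (K / M) * (∫ y in Icc a b, |v' y|)
        + (1 / M) * |∫ y in Icc a b, ρ y * v y| := by
  intro x hx
  set J : ℝ := ∫ y in Icc a b, |v' y| with hJ
  set I : ℝ := ∫ y in Icc a b, ρ y with hI
  set A : ℝ := ∫ y in Icc a b, ρ y * v y with hA
  have hvc : ContinuousOn v (Icc a b) := fun y hy => (hv y hy).continuousWithinAt
  have hv'int : IntegrableOn v' (Icc a b) := hv'.integrableOn_Icc
  have habs : IntegrableOn (fun y => |v' y|) (Icc a b) := hv'int.abs
  have hJ0 : 0 ≤ J := setIntegral_nonneg measurableSet_Icc (fun y _ => abs_nonneg _)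
  -- FTC: for c ≤ d in Icc a b, v d - v c = ∫ t in c..d, v' t
  have ftc : ∀ c ∈ Icc a b, ∀ d ∈ Icc a b, c ≤ d →
      v d - v c = ∫ t in c..d, v' t := by
    intro c hc d hd hcd
    refine (intervalIntegral.integral_eq_sub_of_hasDeriv_right_of_le hcd
      (hvc.mono (Icc_subset_Icc hc.1 hd.2)) (fun t ht => ?_) ?_).symm
    · have ht' : t ∈ Ioo a b := ⟨lt_of_le_of_lt hc.1 ht.1, lt_of_lt_of_le ht.2 hd.2⟩
      exact ((hv t ⟨ht'.1.le, ht'.2.le⟩).hasDerivAt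
        (Icc_mem_nhds ht'.1 ht'.2)).hasDerivWithinAt
    · exact (hv'int.mono_set (by rw [uIcc_of_le hcd]; exact Icc_subset_Icc hc.1 hd.2)).intervalIntegrable
  -- key bound: |v x - v y| ≤ J for y ∈ Icc a b
  have key : ∀ y ∈ Icc a b, |v x - v y| ≤ J := by
    intro y hy
    have bound : ∀ c ∈ Icc a b, ∀ d ∈ Icc a b, c ≤ d → |v d - v c| ≤ J := by
      intro c hc d hd hcd
      rw [ftc c hc d hd hcd]
      calc |∫ t in c..d, v' t| ≤ ∫ t in c..d, |v' t| :=
            intervalIntegral.abs_integral_le_integral_abs hcd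
        _ = ∫ t in Ioc c d, |v' t| := intervalIntegral.integral_of_le hcd
        _ ≤ J := by
            apply setIntegral_mono_set habs
            · exact Filter.Eventually.of_forall (fun t => abs_nonneg _)
            · exact HasSubset.Subset.eventuallyLE
                ((Ioc_subset_Icc_self).trans (Icc_subset_Icc hc.1 hd.2))
    rcases le_total y x with h | h
    · exact bound y hy x hx h
    · rw [abs_sub_comm]; exact bound x hx y hy h
  -- integrability facts
  have hdiff : IntegrableOn (fun y => ρ y * (v x - v y)) (Icc a b) := by
    have : IntegrableOn (fun y => ρ y * v x - ρ y * v y) (Icc a b) :=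
      (hρint.mul_const (v x)).sub hρv
    exact this.congr_fun (fun y _ => by ring) measurableSet_Icc
  -- v x * I - A = ∫ ρ (v x - v y)
  have eq1 : v x * I - A = ∫ y in Icc a b, ρ y * (v x - v y) := by
    have : (∫ y in Icc a b, ρ y * (v x - v y))
        = (∫ y in Icc a b, (ρ y * v x - ρ y * v y)) := by
      apply setIntegral_congr_fun measurableSet_Icc
      intro y _; ring
    rw [this, integral_sub (hρint.mul_const (v x)) hρv, integral_mul_const]
    ring
  -- bound the integral
  have bnd : |∫ y in Icc a b, ρ y * (v x - v y)| ≤ K * J := by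
    calc |∫ y in Icc a b, ρ y * (v x - v y)|
        ≤ ∫ y in Icc a b, |ρ y * (v x - v y)| := by
          simpa [Real.norm_eq_abs, abs_mul] using
            norm_integral_le_integral_norm (μ := volume.restrict (Icc a b))
              (fun y => ρ y * (v x - v y))
      _ ≤ ∫ y in Icc a b, ρ y * J := by
          apply setIntegral_mono_on hdiff.abs (hρint.mul_const J) measurableSet_Icc
          intro y hy
          rw [abs_mul, abs_of_nonneg (hρ0 y hy)]
          exact mul_le_mul_of_nonneg_left (key y hy) (hρ0 y hy)
      _ = I * J := by rw [integral_mul_const]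
      _ ≤ K * J := mul_le_mul_of_nonneg_right hup hJ0
  have hMI : M ≤ I := hlow
  have main : M * |v x| ≤ K * J + |A| := by
    calc M * |v x| ≤ I * |v x| := mul_le_mul_of_nonneg_right hMI (abs_nonneg _)
      _ = |v x * I| := by rw [abs_mul, abs_of_nonneg (hM.le.trans hMI), mul_comm]
      _ ≤ |v x * I - A| + |A| := by
          have := abs_sub_abs_le_abs_sub (v x * I) A
          have h2 := abs_add_le (v x * I - A) A
          simpa using (abs_add_le (v x * I - A) A).trans_eq' (by ring_nf; exact abs_mul _ _)
      _ ≤ K * J + |A| := by rw [eq1]; exact add_le_add_left bnd _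
  have hrhs : M * ((K / M) * J + (1 / M) * |A|) = K * J + |A| := by
    field_simp
  have : M * |v x| ≤ M * ((K / M) * J + (1 / M) * |A|) := by rw [hrhs]; exact main
  exact le_of_mul_le_mul_left this hM
end

section
/- Let I = [0,1]. For all constants M, K, c̄ > 0 and every exponent l > 0 there exists a constant C > 0, depending only on M, K, l and c̄, with the following property: for every nonnegative integrable function ρ : I → ℝ with M ≤ ∫_I ρ ≤ K, and every continuous function v : I → ℝ with v ≥ 0 such that the function w = v^l is continuously differentiable on I and ∫_I ρ(y) v(y) dy ≤ c̄, one has sup_{x ∈ I} v(x)^l ≤ C (∫_I (w'(y))² dy)^{1/2} + C. -/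
open MeasureTheory Set

private lemma cs_aux (w' : ℝ → ℝ) (hw' : ContinuousOn w' (Icc (0:ℝ) 1)) :
    (∫ y in Icc (0:ℝ) 1, |w' y|) ≤ (∫ y in Icc (0:ℝ) 1, (w' y) ^ 2) ^ ((1:ℝ)/2) := by
  have hms : MeasurableSet (Icc (0:ℝ) 1) := measurableSet_Icc
  obtain ⟨B, hB⟩ := isCompact_Icc.exists_bound_of_continuousOn hw'
  have haesm : AEStronglyMeasurable w' (volume.restrict (Icc (0:ℝ) 1)) :=
    hw'.aestronglyMeasurable hms
  have hmem : MemLp (fun y => |w' y|) (ENNReal.ofReal 2) (volume.restrict (Icc (0:ℝ) 1)) := by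
    apply MemLp.of_bound haesm.norm B
    filter_upwards [ae_restrict_mem hms] with y hy
    simpa using hB y hy
  have hmem1 : MemLp (fun _ : ℝ => (1:ℝ)) (ENNReal.ofReal 2) (volume.restrict (Icc (0:ℝ) 1)) :=
    memLp_const 1
  have hpq : Real.HolderConjugate 2 2 := Real.HolderConjugate.two_two
  have h := integral_mul_le_Lp_mul_Lq_of_nonneg (μ := volume.restrict (Icc (0:ℝ) 1)) hpq
    (f := fun y => |w' y|) (g := fun _ => 1)
    (Filter.Eventually.of_forall fun y => abs_nonneg _)
    (Filter.Eventually.of_forall fun y => zero_le_one) hmem hmem1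
  simp only [mul_one] at h
  have h2 : ∫ y in Icc (0:ℝ) 1, |w' y| ^ (2:ℝ) = ∫ y in Icc (0:ℝ) 1, (w' y) ^ 2 := by
    apply setIntegral_congr_fun hms
    intro y hy
    rw [show ((2:ℝ)) = ((2:ℕ):ℝ) by norm_num]
    simp only [Real.rpow_natCast, sq_abs]
  have h3 : ∫ y in Icc (0:ℝ) 1, (1:ℝ) ^ (2:ℝ) = 1 := by
    simp [Real.one_rpow, Real.volume_Icc]
  rw [h2, h3] at h
  simpa using h

/-- Corollary 2.1: weighted sup-norm bound for powers on I = [0,1]. -/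
theorem stmt_1 (M K cbar l : ℝ) (hM : 0 < M) (hK : 0 < K) (hc : 0 < cbar) (hl : 0 < l) :
    ∃ C : ℝ, 0 < C ∧ ∀ (ρ v w' : ℝ → ℝ),
      (∀ y ∈ Icc (0:ℝ) 1, 0 ≤ ρ y) →
      IntegrableOn ρ (Icc (0:ℝ) 1) →
      M ≤ (∫ y in Icc (0:ℝ) 1, ρ y) →
      (∫ y in Icc (0:ℝ) 1, ρ y) ≤ K →
      ContinuousOn v (Icc (0:ℝ) 1) →
      (∀ y ∈ Icc (0:ℝ) 1, 0 ≤ v y) →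
      (∀ y ∈ Icc (0:ℝ) 1, HasDerivWithinAt (fun x => v x ^ l) (w' y) (Icc (0:ℝ) 1) y) →
      ContinuousOn w' (Icc (0:ℝ) 1) →
      (∫ y in Icc (0:ℝ) 1, ρ y * v y) ≤ cbar →
      ∀ x ∈ Icc (0:ℝ) 1,
        v x ^ l ≤ C * (∫ y in Icc (0:ℝ) 1, (w' y) ^ 2) ^ ((1:ℝ)/2) + C := by
  refine ⟨(cbar / M) ^ l + 1, by positivity, ?_⟩
  intro ρ v w' hρ0 hρint hMle hKle hv hv0 hderiv hw'cont hρv x hx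
  have hms : MeasurableSet (Icc (0:ℝ) 1) := measurableSet_Icc
  set w : ℝ → ℝ := fun x => v x ^ l with hw
  -- w is continuous on I
  have hwcont : ContinuousOn w (Icc (0:ℝ) 1) := by
    apply ContinuousOn.rpow_const hv
    intro y hy
    exact Or.inr hl.le
  -- minimum point of v
  obtain ⟨y₀, hy₀, hmin⟩ := isCompact_Icc.exists_isMinOn (nonempty_Icc.2 zero_le_one) hv
  -- v y₀ ≤ cbar / M
  have hvy₀ : v y₀ ≤ cbar / M := by
    by_contra h
    push_neg at h
    have hint_v : IntegrableOn (fun y => ρ y * v y) (Icc (0:ℝ) 1) :=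
      hρint.mul_continuousOn hv isCompact_Icc
    have h1 : v y₀ * (∫ y in Icc (0:ℝ) 1, ρ y) ≤ ∫ y in Icc (0:ℝ) 1, ρ y * v y := by
      rw [← integral_const_mul]
      apply setIntegral_mono_on (hρint.continuousOn_mul ?_ isCompact_Icc) hint_v hms
      · intro y hy
        rw [mul_comm (v y₀)]
        exact mul_le_mul_of_nonneg_left (hmin hy) (hρ0 y hy)
      · exact continuousOn_const
    have h2 : cbar < v y₀ * M := by
      exact (div_lt_iff₀ hM).mp h
    have h3 : v y₀ * M ≤ v y₀ * (∫ y in Icc (0:ℝ) 1, ρ y) :=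
      mul_le_mul_of_nonneg_left hMle (hv0 y₀ hy₀)
    linarith
  -- w y₀ ≤ (cbar/M)^l
  have hwy₀ : w y₀ ≤ (cbar / M) ^ l :=
    Real.rpow_le_rpow (hv0 y₀ hy₀) hvy₀ hl.le
  -- FTC helper: for a ≤ b in I, w b - w a = ∫ in a..b, w'
  have ftc : ∀ a b : ℝ, a ∈ Icc (0:ℝ) 1 → b ∈ Icc (0:ℝ) 1 → a ≤ b →
      w b - w a = ∫ y in a..b, w' y := by
    intro a b ha hb hab
    have hsub : Icc a b ⊆ Icc (0:ℝ) 1 := Icc_subset_Icc ha.1 hb.2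
    refine (intervalIntegral.integral_eq_sub_of_hasDeriv_right_of_le hab
      (hwcont.mono hsub) ?_ ?_).symm
    · intro t ht
      have ht' : t ∈ Ioo (0:ℝ) 1 := ⟨lt_of_le_of_lt ha.1 ht.1, lt_of_lt_of_le ht.2 hb.2⟩
      have hd : HasDerivAt w (w' t) t :=
        (hderiv t (Ioo_subset_Icc_self ht')).hasDerivAt (Icc_mem_nhds ht'.1 ht'.2)
      exact hd.hasDerivWithinAt
    · exact (hw'cont.mono hsub).intervalIntegrable_of_Icc hab
  -- bound |∫ in a..b, w'| by ∫ |w'| over I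
  have habs_int : IntegrableOn (fun y => |w' y|) (Icc (0:ℝ) 1) :=
    (hw'cont.abs.integrableOn_compact isCompact_Icc)
  have key : ∀ a b : ℝ, a ∈ Icc (0:ℝ) 1 → b ∈ Icc (0:ℝ) 1 → a ≤ b →
      w b - w a ≤ ∫ y in Icc (0:ℝ) 1, |w' y| := by
    intro a b ha hb hab
    rw [ftc a b ha hb hab]
    have hsub : Icc a b ⊆ Icc (0:ℝ) 1 := Icc_subset_Icc ha.1 hb.2
    calc ∫ y in a..b, w' y ≤ ∫ y in a..b, |w' y| := by
          apply intervalIntegral.integral_mono_on hab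
          · exact (hw'cont.mono hsub).intervalIntegrable_of_Icc hab
          · exact ((hw'cont.mono hsub).abs).intervalIntegrable_of_Icc hab
          · intro y _; exact le_abs_self _
      _ = ∫ y in Ioc a b, |w' y| := by
          rw [intervalIntegral.integral_of_le hab]
      _ ≤ ∫ y in Icc (0:ℝ) 1, |w' y| := by
          apply setIntegral_mono_set habs_int
          · filter_upwards with y using abs_nonneg _
          · exact Filter.Eventually.of_forall ((Ioc_subset_Icc_self).trans hsub)
  -- main bound: w x ≤ w y₀ + ∫ |w'|
  have hmain : w x ≤ (cbar / M) ^ l + ∫ y in Icc (0:ℝ) 1, |w' y| := by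
    rcases le_total y₀ x with h | h
    · have := key y₀ x hy₀ hx h
      linarith
    · have := key x y₀ hx hy₀ h
      have hint_nonneg : (0:ℝ) ≤ ∫ y in Icc (0:ℝ) 1, |w' y| :=
        setIntegral_nonneg hms fun y _ => abs_nonneg _
      -- Need other direction: use ftc reversed
      have h2 := ftc x y₀ hx hy₀ h
      have : w x - w y₀ = - ∫ y in x..y₀, w' y := by linarith
      have h3 : - ∫ y in x..y₀, w' y ≤ ∫ y in Icc (0:ℝ) 1, |w' y| := by
        have hsub : Icc x y₀ ⊆ Icc (0:ℝ) 1 := Icc_subset_Icc hx.1 hy₀.2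
        calc - ∫ y in x..y₀, w' y = ∫ y in x..y₀, -(w' y) := by
              rw [intervalIntegral.integral_neg]
          _ ≤ ∫ y in x..y₀, |w' y| := by
              apply intervalIntegral.integral_mono_on h
              · exact ((hw'cont.mono hsub).neg).intervalIntegrable_of_Icc h
              · exact ((hw'cont.mono hsub).abs).intervalIntegrable_of_Icc h
              · intro y _; exact neg_le_abs _
          _ = ∫ y in Ioc x y₀, |w' y| := by
              rw [intervalIntegral.integral_of_le h]
          _ ≤ ∫ y in Icc (0:ℝ) 1, |w' y| := by
              apply setIntegral_mono_set habs_int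
              · filter_upwards with y using abs_nonneg _
              · exact Filter.Eventually.of_forall ((Ioc_subset_Icc_self).trans hsub)
      linarith
  -- combine with Cauchy–Schwarz
  have hcs := cs_aux w' hw'cont
  have hA : (0:ℝ) ≤ (∫ y in Icc (0:ℝ) 1, (w' y) ^ 2) ^ ((1:ℝ)/2) :=
    Real.rpow_nonneg (setIntegral_nonneg hms fun y _ => sq_nonneg _) _
  have hC1 : (0:ℝ) ≤ (cbar / M) ^ l := Real.rpow_nonneg (by positivity) _
  nlinarith [hmain, hcs, hA, hC1]
end

section
/- Let m ≥ 1 be an integer and let a > 0. Then there exists a constant c > 0, depending only on a and m (in particular independent of b), such that for every b > a and every continuously differentiable function u : [a,b] → ℝ with u(a) = 0, one has sup_{r ∈ [a,b]} |u(r)| ≤ c (∫_a^b ( r^m u'(r)² + m r^{m−2} u(r)² ) dr)^{1/2}. -/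
open MeasureTheory Set

/-- The weighted radial Sobolev inequality (2.3) for spherically symmetric
functions vanishing at the inner boundary `r = a`. -/
theorem stmt_3 (m : ℕ) (hm : 1 ≤ m) (a : ℝ) (ha : 0 < a) :
    ∃ c : ℝ, 0 < c ∧ ∀ b : ℝ, a < b → ∀ u u' : ℝ → ℝ,
      (∀ r ∈ Icc a b, HasDerivWithinAt u (u' r) (Icc a b) r) →
      ContinuousOn u' (Icc a b) →
      u a = 0 →
      ∀ r ∈ Icc a b,
        |u r| ≤ c * (∫ s in Icc a b,
          (s ^ (m:ℝ) * (u' s) ^ 2 + (m:ℝ) * s ^ ((m:ℝ) - 2) * (u s) ^ 2)) ^ ((1:ℝ)/2) := by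
  have hm1 : (1:ℝ) ≤ (m:ℝ) := by exact_mod_cast hm
  refine ⟨Real.sqrt (a ^ ((1:ℝ) - (m:ℝ))),
    Real.sqrt_pos.mpr (Real.rpow_pos_of_pos ha _), ?_⟩
  intro b hab u u' hu hu' hua r hr
  have hpos : ∀ s ∈ Icc a b, (0:ℝ) < s := fun s hs => lt_of_lt_of_le ha hs.1
  set f : ℝ → ℝ := fun s =>
    s ^ (m:ℝ) * (u' s) ^ 2 + (m:ℝ) * s ^ ((m:ℝ) - 2) * (u s) ^ 2 with hfdef
  have hucont : ContinuousOn u (Icc a b) := fun x hx => (hu x hx).continuousWithinAt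
  have hrpowC : ∀ p : ℝ, ContinuousOn (fun s : ℝ => s ^ p) (Icc a b) := by
    intro p
    exact ContinuousOn.rpow_const continuousOn_id
      (fun x hx => Or.inl (hpos x hx).ne')
  have hfc : ContinuousOn f (Icc a b) := by
    apply ContinuousOn.add
    · exact (hrpowC _).mul (hu'.pow 2)
    · exact (continuousOn_const.mul (hrpowC _)).mul (hucont.pow 2)
  have hfnn : ∀ s ∈ Icc a b, 0 ≤ f s := by
    intro s hs
    have h1 : (0:ℝ) ≤ s ^ (m:ℝ) := (Real.rpow_pos_of_pos (hpos s hs) _).le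
    have h2 : (0:ℝ) ≤ s ^ ((m:ℝ) - 2) := (Real.rpow_pos_of_pos (hpos s hs) _).le
    have h3 : (0:ℝ) ≤ (m:ℝ) := by positivity
    positivity
  set g : ℝ → ℝ := fun s => s ^ ((m:ℝ) - 1) * (u s) ^ 2 with hgdef
  set g' : ℝ → ℝ := fun s =>
    ((m:ℝ) - 1) * s ^ ((m:ℝ) - 2) * (u s) ^ 2 + s ^ ((m:ℝ) - 1) * (2 * u s * u' s)
    with hg'def
  have hg : ∀ x ∈ Icc a b, HasDerivWithinAt g (g' x) (Icc a b) x := by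
    intro x hx
    have h1 : HasDerivWithinAt (fun s : ℝ => s ^ ((m:ℝ) - 1))
        (((m:ℝ) - 1) * x ^ ((m:ℝ) - 1 - 1)) (Icc a b) x :=
      (Real.hasDerivAt_rpow_const (Or.inl (hpos x hx).ne')).hasDerivWithinAt
    have h2 : HasDerivWithinAt (fun s => (u s) ^ 2) (2 * u x * u' x) (Icc a b) x := by
      have := (hu x hx).pow 2
      norm_num at this
      exact this
    have := h1.mul h2
    have he : (m:ℝ) - 1 - 1 = (m:ℝ) - 2 := by ring
    rw [he] at this
    exact this
  have hg'c : ContinuousOn g' (Icc a b) := by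
    apply ContinuousOn.add
    · exact (continuousOn_const.mul (hrpowC _)).mul (hucont.pow 2)
    · exact (hrpowC _).mul
        ((continuousOn_const.mul hucont).mul hu')
  have hra : a ≤ r := hr.1
  have hrb : r ≤ b := hr.2
  have hsub : Icc a r ⊆ Icc a b := Icc_subset_Icc le_rfl hrb
  have hsub2 : Icc r b ⊆ Icc a b := Icc_subset_Icc hra le_rfl
  -- FTC for g on [a, r]
  have hgcont : ContinuousOn g (Icc a b) := (hrpowC _).mul (hucont.pow 2)
  have hg'int : IntervalIntegrable g' volume a r :=
    (hg'c.mono hsub).intervalIntegrable_of_Icc hra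
  have hfint1 : IntervalIntegrable f volume a r :=
    (hfc.mono hsub).intervalIntegrable_of_Icc hra
  have hfint2 : IntervalIntegrable f volume r b :=
    (hfc.mono hsub2).intervalIntegrable_of_Icc hrb
  have hfintab : IntervalIntegrable f volume a b :=
    hfc.intervalIntegrable_of_Icc hab.le
  have hftc : ∫ y in a..r, g' y = g r - g a := by
    apply intervalIntegral.integral_eq_sub_of_hasDeriv_right_of_le hra
      (hgcont.mono hsub) ?_ hg'int
    intro x hx
    have hx1 : a < x := hx.1
    have hx2 : x < b := lt_of_lt_of_le hx.2 hrb
    have hnhds : Icc a b ∈ nhds x := Icc_mem_nhds hx1 hx2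
    exact ((hg x ⟨hx1.le, hx2.le⟩).hasDerivAt hnhds).hasDerivWithinAt
  -- pointwise bound g' ≤ f on Icc a r
  have hptwise : ∀ x ∈ Icc a r, g' x ≤ f x := by
    intro x hx
    have hxpos : 0 < x := hpos x (hsub hx)
    have hYpos : 0 < x ^ ((m:ℝ) - 2) := Real.rpow_pos_of_pos hxpos _
    have key : 0 ≤ x ^ ((m:ℝ) - 2) * (u x - x * u' x) ^ 2 := by positivity
    have e3 : x ^ ((m:ℝ) - 1) = x ^ ((m:ℝ) - 2) * x := by
      have h : (m:ℝ) - 1 = ((m:ℝ) - 2) + 1 := by ring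
      rw [h, Real.rpow_add_one hxpos.ne']
    have e4 : x ^ (m:ℝ) = x ^ ((m:ℝ) - 2) * x * x := by
      rw [← Real.rpow_add_one hxpos.ne', ← Real.rpow_add_one hxpos.ne']
      congr 1
      ring
    simp only [hg'def, hfdef, e3, e4]
    nlinarith [key]
  have hmono : ∫ y in a..r, g' y ≤ ∫ y in a..r, f y :=
    intervalIntegral.integral_mono_on hra hg'int hfint1 hptwise
  have hnn2 : (0:ℝ) ≤ ∫ y in r..b, f y :=
    intervalIntegral.integral_nonneg hrb (fun x hx => hfnn x (hsub2 hx))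
  have hsplit : (∫ y in a..r, f y) + ∫ y in r..b, f y = ∫ y in a..b, f y :=
    intervalIntegral.integral_add_adjacent_intervals hfint1 hfint2
  set I : ℝ := ∫ s in Icc a b, f s with hI
  have hIeq : I = ∫ y in a..b, f y := by
    rw [hI, intervalIntegral.integral_of_le hab.le,
      MeasureTheory.integral_Icc_eq_integral_Ioc]
  have hInn : 0 ≤ I := by
    rw [hIeq, ← hsplit]
    have h1 : (0:ℝ) ≤ ∫ y in a..r, f y :=
      intervalIntegral.integral_nonneg hra (fun x hx => hfnn x (hsub hx))
    linarith
  have hkey : r ^ ((m:ℝ) - 1) * (u r) ^ 2 ≤ I := by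
    have hga : g a = 0 := by simp [hgdef, hua]
    have : g r ≤ ∫ y in a..r, f y := by
      rw [← sub_zero (g r), ← hga, ← hftc]; exact hmono
    rw [hIeq, ← hsplit]
    calc r ^ ((m:ℝ) - 1) * (u r) ^ 2 = g r := rfl
      _ ≤ ∫ y in a..r, f y := this
      _ ≤ _ := by linarith
  -- a^(m-1) ≤ r^(m-1)
  have hmono2 : a ^ ((m:ℝ) - 1) ≤ r ^ ((m:ℝ) - 1) :=
    Real.rpow_le_rpow ha.le hra (by linarith)
  have hkey2 : a ^ ((m:ℝ) - 1) * (u r) ^ 2 ≤ I :=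
    le_trans (by nlinarith [sq_nonneg (u r)]) hkey
  have hinv : a ^ ((1:ℝ) - (m:ℝ)) * a ^ ((m:ℝ) - 1) = 1 := by
    rw [← Real.rpow_add ha]
    norm_num
  have hfin : (u r) ^ 2 ≤ a ^ ((1:ℝ) - (m:ℝ)) * I := by
    have hap : 0 < a ^ ((1:ℝ) - (m:ℝ)) := Real.rpow_pos_of_pos ha _
    have := mul_le_mul_of_nonneg_left hkey2 hap.le
    calc (u r) ^ 2 = a ^ ((1:ℝ) - (m:ℝ)) * (a ^ ((m:ℝ) - 1) * (u r) ^ 2) := by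
          rw [← mul_assoc, hinv, one_mul]
      _ ≤ a ^ ((1:ℝ) - (m:ℝ)) * I := this
  calc |u r| = Real.sqrt ((u r) ^ 2) := (Real.sqrt_sq_eq_abs _).symm
    _ ≤ Real.sqrt (a ^ ((1:ℝ) - (m:ℝ)) * I) := Real.sqrt_le_sqrt hfin
    _ = Real.sqrt (a ^ ((1:ℝ) - (m:ℝ))) * Real.sqrt I :=
        Real.sqrt_mul (Real.rpow_pos_of_pos ha _).le _
    _ = Real.sqrt (a ^ ((1:ℝ) - (m:ℝ))) * I ^ ((1:ℝ)/2) := by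
        rw [Real.sqrt_eq_rpow I]
end

section
/- Let d ≥ 1 be an integer. Let m, n : ℝ^d × ℝ → ℝ and u : ℝ^d × ℝ → ℝ^d be differentiable at a point (x₀, t₀), and suppose m(x₀, t₀) ≠ 0. Assume the two continuity equations hold at (x₀, t₀): ∂_t m + div_x(m u) = 0 and ∂_t n + div_x(n u) = 0, where div_x(m u) = Σ_{i=1}^d ∂_{x_i}(m u_i) and similarly for n u. Then the ratio n/m satisfies the transport equation at (x₀, t₀): ∂_t(n/m) + u · ∇_x(n/m) = 0. -/
/-- The core pointwise computation of Lemma 4.1: if the masses `m` and `n` both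
satisfy continuity equations with the same velocity field `u`, then the ratio
`n/m` satisfies the transport equation. -/
theorem stmt_4 (d : ℕ) (hd : 1 ≤ d)
    (m n : (Fin d → ℝ) × ℝ → ℝ) (u : (Fin d → ℝ) × ℝ → (Fin d → ℝ))
    (p : (Fin d → ℝ) × ℝ)
    (hm : DifferentiableAt ℝ m p) (hn : DifferentiableAt ℝ n p)
    (hu : DifferentiableAt ℝ u p) (hm0 : m p ≠ 0)
    (heqm : fderiv ℝ m p (0, 1)
      + ∑ i, fderiv ℝ (fun q => m q * u q i) p (Pi.single i 1, 0) = 0)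
    (heqn : fderiv ℝ n p (0, 1)
      + ∑ i, fderiv ℝ (fun q => n q * u q i) p (Pi.single i 1, 0) = 0) :
    fderiv ℝ (fun q => n q / m q) p (0, 1)
      + ∑ i, u p i * fderiv ℝ (fun q => n q / m q) p (Pi.single i 1, 0) = 0 := by
  have hui : ∀ i, DifferentiableAt ℝ (fun q => u q i) p := fun i =>
    (differentiableAt_pi.1 hu) i
  -- derivative of 1/m
  have hinv : HasFDerivAt (fun q => (m q)⁻¹)
      ((-((m p) ^ 2)⁻¹) • fderiv ℝ m p) p :=
    (hasDerivAt_inv hm0).comp_hasFDerivAt p hm.hasFDerivAt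
  have hquot : HasFDerivAt (fun q => n q / m q)
      (n p • ((-((m p) ^ 2)⁻¹) • fderiv ℝ m p) + (m p)⁻¹ • fderiv ℝ n p) p := by
    have := hn.hasFDerivAt.mul hinv
    refine this.congr_of_eventuallyEq (Filter.Eventually.of_forall fun q => ?_)
    simp [div_eq_mul_inv]
  have hq : fderiv ℝ (fun q => n q / m q) p
      = n p • ((-((m p) ^ 2)⁻¹) • fderiv ℝ m p) + (m p)⁻¹ • fderiv ℝ n p :=
    hquot.fderiv
  have hpm : ∀ i, fderiv ℝ (fun q => m q * u q i) p
      = m p • fderiv ℝ (fun q => u q i) p + u p i • fderiv ℝ m p :=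
    fun i => fderiv_mul hm (hui i)
  have hpn : ∀ i, fderiv ℝ (fun q => n q * u q i) p
      = n p • fderiv ℝ (fun q => u q i) p + u p i • fderiv ℝ n p :=
    fun i => fderiv_mul hn (hui i)
  simp only [hpm, hpn, ContinuousLinearMap.add_apply, ContinuousLinearMap.smul_apply,
    smul_eq_mul, Finset.sum_add_distrib, ← Finset.mul_sum] at heqm heqn
  simp only [hq, ContinuousLinearMap.add_apply, ContinuousLinearMap.smul_apply,
    smul_eq_mul, Finset.mul_sum, Finset.sum_add_distrib, mul_add]
  set S := ∑ i, fderiv ℝ (fun q => u q i) p (Pi.single i 1, 0)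
  set A := fderiv ℝ m p (0, 1)
  set B := fderiv ℝ n p (0, 1)
  set SM := ∑ i, u p i * fderiv ℝ m p (Pi.single i 1, 0)
  set SN := ∑ i, u p i * fderiv ℝ n p (Pi.single i 1, 0)
  have h1 : ∑ i, u p i * (n p * (-((m p) ^ 2)⁻¹ * fderiv ℝ m p (Pi.single i 1, 0)))
      = n p * (-((m p) ^ 2)⁻¹) * SM := by
    rw [Finset.mul_sum]; congr 1; ext i; ring
  have h2 : ∑ i, u p i * ((m p)⁻¹ * fderiv ℝ n p (Pi.single i 1, 0))
      = (m p)⁻¹ * SN := by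
    rw [Finset.mul_sum]; congr 1; ext i; ring
  rw [h1, h2]
  field_simp
  linear_combination (-(n p)) * heqm + (m p) * heqn
end

section
/- Let C⁰, k₀, a₀ > 0 and define the pressure law P(m,n) = C⁰(−b(m,n) + √(b(m,n)² + c(n))) where b(m,n) = k₀ − m − a₀ n and c(n) = 4 k₀ a₀ n. Then for every m ≥ 0 and every n > 0, the function n ↦ P(m,n) is differentiable at n, its derivative equals C⁰ ( a₀ + a₀ (m + a₀ n + k₀)/√(b(m,n)² + c(n)) ), and this derivative is strictly positive. -/
/-- Formula (4.9) of Lemma 4.2: differentiability of the two-phase pressure law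
in `n`, the formula for `∂P/∂n`, and its strict positivity. -/
theorem stmt_9 (C0 k0 a0 : ℝ) (hC : 0 < C0) (hk : 0 < k0) (ha : 0 < a0)
    (m n : ℝ) (hm : 0 ≤ m) (hn : 0 < n) :
    HasDerivAt (fun n' => C0 * (-(k0 - m - a0 * n')
        + Real.sqrt ((k0 - m - a0 * n') ^ 2 + 4 * k0 * a0 * n')))
      (C0 * (a0 + a0 * (m + a0 * n + k0)
        / Real.sqrt ((k0 - m - a0 * n) ^ 2 + 4 * k0 * a0 * n))) n ∧
    0 < C0 * (a0 + a0 * (m + a0 * n + k0)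
        / Real.sqrt ((k0 - m - a0 * n) ^ 2 + 4 * k0 * a0 * n)) := by
  have hQ : 0 < (k0 - m - a0 * n) ^ 2 + 4 * k0 * a0 * n := by positivity
  have hs : 0 < Real.sqrt ((k0 - m - a0 * n) ^ 2 + 4 * k0 * a0 * n) :=
    Real.sqrt_pos.mpr hQ
  have hb : HasDerivAt (fun n' : ℝ => k0 - m - a0 * n') (-a0) n := by
    simpa using (((hasDerivAt_id n).const_mul a0).const_sub (k0 - m))
  have hsq := hb.pow 2
  have hlin : HasDerivAt (fun n' : ℝ => 4 * k0 * a0 * n') (4 * k0 * a0) n := by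
    simpa using (hasDerivAt_id n).const_mul (4 * k0 * a0)
  have hin := hsq.add hlin
  have hsqrt := hin.sqrt (ne_of_gt hQ)
  have hfull := ((hb.neg).add hsqrt).const_mul C0
  constructor
  · refine hfull.congr_deriv ?_
    simp only [Pi.add_apply, Pi.pow_apply]
    field_simp
    ring
  · have h1 : 0 < a0 * (m + a0 * n + k0) /
        Real.sqrt ((k0 - m - a0 * n) ^ 2 + 4 * k0 * a0 * n) :=
      div_pos (by positivity) hs
    have := add_pos ha h1
    exact mul_pos hC this
end

section
/- Let k₀, a₀, s₀ > 0 and let m, n > 0 satisfy s₀ m ≤ n. Then (m + a₀ n + k₀)² / ( (k₀ − m − a₀ n)² + 4 k₀ a₀ n ) ≤ 1 + 2/(a₀ s₀). -/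
/-- The key algebraic inequality in the proof of (4.7) of Lemma 4.2. -/
theorem stmt_10 (k0 a0 s0 m n : ℝ) (hk : 0 < k0) (ha : 0 < a0) (hs : 0 < s0)
    (hm : 0 < m) (hn : 0 < n) (hsm : s0 * m ≤ n) :
    (m + a0 * n + k0) ^ 2 / ((k0 - m - a0 * n) ^ 2 + 4 * k0 * a0 * n)
      ≤ 1 + 2 / (a0 * s0) := by
  have hD : 0 < (k0 - m - a0 * n) ^ 2 + 4 * k0 * a0 * n := by positivity
  have has : 0 < a0 * s0 := by positivity
  rw [div_le_iff₀ hD, ← mul_le_mul_iff_left₀ has]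
  have h2 : 2 / (a0 * s0) * (a0 * s0) = 2 := div_mul_cancel₀ 2 (ne_of_gt has)
  nlinarith [sq_nonneg (k0 - m - a0 * n), mul_pos hk hm,
    mul_le_mul_of_nonneg_left hsm (by positivity : (0:ℝ) ≤ 4 * k0 * a0)]
end

section
/- Let C⁰, k₀, a₀, s̄₀ > 0 and define the pressure law P(m,n) = C⁰(−b(m,n) + √(b(m,n)² + c(n))) where b(m,n) = k₀ − m − a₀ n and c(n) = 4 k₀ a₀ n. Then there exists a constant C > 0, depending only on C⁰, k₀, a₀ and s̄₀, such that for all m ≥ 0 and all n with 0 ≤ n ≤ s̄₀ m, one has P(m,n) ≤ C (1 + m). -/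
/-- The upper bound in assertion (4.5) of Lemma 4.2: `P(m,n) ≤ C (1 + m)`
under the constraint `n ≤ s̄₀ m`. -/
theorem stmt_11 (C0 k0 a0 sbar : ℝ) (hC : 0 < C0) (hk : 0 < k0) (ha : 0 < a0)
    (hsbar : 0 < sbar) :
    ∃ C : ℝ, 0 < C ∧ ∀ m n : ℝ, 0 ≤ m → 0 ≤ n → n ≤ sbar * m →
      C0 * (-(k0 - m - a0 * n)
        + Real.sqrt ((k0 - m - a0 * n) ^ 2 + 4 * k0 * a0 * n)) ≤ C * (1 + m) := by
  refine ⟨C0 * (2*k0 + 2 + 2*a0*sbar + 4*k0*a0*sbar), by positivity, ?_⟩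
  intro m n hm hn hns
  set b := k0 - m - a0 * n with hbdef
  have hc : (0:ℝ) ≤ 4 * k0 * a0 * n := by positivity
  set s := Real.sqrt (b ^ 2 + 4 * k0 * a0 * n) with hsdef
  set t := Real.sqrt (4 * k0 * a0 * n) with htdef
  have hs0 : 0 ≤ s := Real.sqrt_nonneg _
  have ht0 : 0 ≤ t := Real.sqrt_nonneg _
  have hs2 : s ^ 2 = b ^ 2 + 4 * k0 * a0 * n := Real.sq_sqrt (by positivity)
  have ht2 : t ^ 2 = 4 * k0 * a0 * n := Real.sq_sqrt hc
  have hst : s ≤ |b| + t := by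
    nlinarith [abs_nonneg b, sq_abs b, mul_nonneg (abs_nonneg b) ht0]
  have ht1 : t ≤ 1 + 4 * k0 * a0 * n := by nlinarith [sq_nonneg (t - 1)]
  have hb : |b| ≤ k0 + m + a0 * n := by
    rw [abs_le]
    constructor <;> nlinarith [mul_nonneg ha.le hn]
  have han : a0 * n ≤ a0 * sbar * m := by nlinarith
  have key : -b + s ≤ (2*k0 + 2 + 2*a0*sbar + 4*k0*a0*sbar) * (1 + m) := by
    have hnb : -b ≤ |b| := neg_le_abs b
    nlinarith [mul_le_mul_of_nonneg_left han hk.le,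
      mul_nonneg ha.le (mul_nonneg hsbar.le hm),
      mul_nonneg (mul_nonneg hk.le ha.le) (mul_nonneg hsbar.le hm),
      mul_nonneg ha.le hsbar.le, mul_nonneg hk.le hm,
      mul_nonneg (mul_nonneg hk.le ha.le) hsbar.le]
  calc C0 * (-b + s) ≤ C0 * ((2*k0 + 2 + 2*a0*sbar + 4*k0*a0*sbar) * (1 + m)) :=
        mul_le_mul_of_nonneg_left key hC.le
    _ = C0 * (2*k0 + 2 + 2*a0*sbar + 4*k0*a0*sbar) * (1 + m) := by ring
end

section
/- Let C⁰, k₀, a₀, s̄₀, M > 0 and define the pressure law P(m,n) = C⁰(−b(m,n) + √(b(m,n)² + c(n))) where b(m,n) = k₀ − m − a₀ n and c(n) = 4 k₀ a₀ n. Then there exists a constant C > 0, depending only on C⁰, k₀, a₀, s̄₀ and M, such that for all m with 0 ≤ m ≤ M and all n with 0 ≤ n ≤ s̄₀ m, one has P(m,n) ≤ C √m. -/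
/-- The bound `P(m,n) ≤ C √m` used in the proof of Lemma 5.2, valid when
`0 ≤ m ≤ M` and `0 ≤ n ≤ s̄₀ m`. -/
theorem stmt_12 (C0 k0 a0 sbar M : ℝ) (hC : 0 < C0) (hk : 0 < k0) (ha : 0 < a0)
    (hsbar : 0 < sbar) (hM : 0 < M) :
    ∃ C : ℝ, 0 < C ∧ ∀ m n : ℝ, 0 ≤ m → m ≤ M → 0 ≤ n → n ≤ sbar * m →
      C0 * (-(k0 - m - a0 * n)
        + Real.sqrt ((k0 - m - a0 * n) ^ 2 + 4 * k0 * a0 * n)) ≤ C * Real.sqrt m := by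
  refine ⟨C0 * (2 * (1 + a0 * sbar) * Real.sqrt M + 2 * Real.sqrt (k0 * a0 * sbar)),
    by positivity, ?_⟩
  intro m n hm hmM hn hns
  set b := k0 - m - a0 * n with hb
  have hc : (0:ℝ) ≤ 4 * k0 * a0 * n := by positivity
  have hsc := Real.sqrt_nonneg (4 * k0 * a0 * n)
  have h1 : Real.sqrt (b ^ 2 + 4 * k0 * a0 * n) ≤ |b| + Real.sqrt (4 * k0 * a0 * n) := by
    rw [← Real.sqrt_sq (by positivity : (0:ℝ) ≤ |b| + Real.sqrt (4 * k0 * a0 * n))]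
    apply Real.sqrt_le_sqrt
    have h := Real.sq_sqrt hc
    nlinarith [abs_nonneg b, sq_abs b]
  have h2 : -b + |b| ≤ 2 * (m + a0 * n) := by
    rcases abs_cases b with ⟨h, _⟩ | ⟨h, _⟩ <;> rw [h] <;> nlinarith
  have hsm : Real.sqrt (4 * k0 * a0 * n) ≤ 2 * Real.sqrt (k0 * a0 * sbar) * Real.sqrt m := by
    have h3 : Real.sqrt (4 * k0 * a0 * n) ≤ Real.sqrt (4 * (k0 * a0 * sbar) * m) := by
      apply Real.sqrt_le_sqrt; nlinarith [mul_le_mul_of_nonneg_left hns (by positivity : (0:ℝ) ≤ 4*k0*a0)]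
    have h4 : Real.sqrt (4 * (k0 * a0 * sbar) * m)
        = 2 * Real.sqrt (k0 * a0 * sbar) * Real.sqrt m := by
      rw [Real.sqrt_mul (by positivity) m, show (4:ℝ) * (k0 * a0 * sbar) = 2^2 * (k0*a0*sbar) by ring,
        Real.sqrt_mul (by positivity), Real.sqrt_sq (by norm_num)]
    linarith [h3, h4.le, h4.ge]
  have hmsq : m ≤ Real.sqrt M * Real.sqrt m := by
    calc m = Real.sqrt m * Real.sqrt m := (Real.mul_self_sqrt hm).symm
    _ ≤ Real.sqrt M * Real.sqrt m := by
        apply mul_le_mul_of_nonneg_right (Real.sqrt_le_sqrt hmM) (Real.sqrt_nonneg m)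
  have hn' : a0 * n ≤ a0 * sbar * m := by nlinarith
  have key : -b + Real.sqrt (b ^ 2 + 4 * k0 * a0 * n)
      ≤ 2 * (1 + a0 * sbar) * Real.sqrt M * Real.sqrt m
        + 2 * Real.sqrt (k0 * a0 * sbar) * Real.sqrt m := by
    have : -b + Real.sqrt (b ^ 2 + 4 * k0 * a0 * n)
        ≤ 2 * (m + a0 * n) + Real.sqrt (4 * k0 * a0 * n) := by linarith
    have h5 : 2 * (m + a0 * n) ≤ 2 * (1 + a0 * sbar) * (Real.sqrt M * Real.sqrt m) := by
      nlinarith [mul_le_mul_of_nonneg_left hmsq (by positivity : (0:ℝ) ≤ a0*sbar), hn', hmsq]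
    nlinarith
  calc C0 * (-b + Real.sqrt (b ^ 2 + 4 * k0 * a0 * n))
      ≤ C0 * (2 * (1 + a0 * sbar) * Real.sqrt M * Real.sqrt m
          + 2 * Real.sqrt (k0 * a0 * sbar) * Real.sqrt m) :=
        mul_le_mul_of_nonneg_left key hC.le
    _ = C0 * (2 * (1 + a0 * sbar) * Real.sqrt M + 2 * Real.sqrt (k0 * a0 * sbar)) * Real.sqrt m := by
        ring
end
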